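/- Let X be a Banach space with a monotone FDD E such that, for some q_0 ≥ 1 and θ_0 > 0, every E-block sequence (y_k)_{k=1}^n of vectors of norm at least one satisfies ‖∑_{k=1}^n y_k‖ ≥ θ_0 n^{1/q_0}. Then for Θ = (q_0 θ_0)^{-q_0/(q_0+1)} + (q_0/θ_0^{q_0})^{1/(q_0+1)} and r = (q_0+1)/q_0, every E-block sequence (f_k)_{k=1}^n of functionals in the unit ball of X* satisfies ‖∑_{k=1}^n f_k‖ ≤ Θ n^{1/r}. -/

import Mathlib

open Filter

private lemma log_eq_imp {x y : ℝ} (hx : 0 < x) (hy : 0 < y)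
    (h : Real.log x = Real.log y) : x = y := by
  have := Real.exp_log hx
  rw [h, Real.exp_log hy] at this
  exact this.symm

/-- a lower `θ₀ n^{1/q₀}`-estimate on `E`-block sequences of
norm-one-or-larger vectors (monotone FDD) yields the upper estimate
`‖∑ f_k‖ ≤ Θ n^{1/r}` for `E`-block sequences of functionals in the unit ball,
where `Θ = (q₀θ₀)^{-q₀/(q₀+1)} + (q₀/θ₀^{q₀})^{1/(q₀+1)}` and `r = (q₀+1)/q₀`. -/
theorem stmt_17
    {X : Type*} [NormedAddCommGroup X] [NormedSpace ℂ X] [CompleteSpace X]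
    (S : ℕ → X →L[ℂ] X) (hS0 : S 0 = 0)
    (hSmul : ∀ m n, (S m).comp (S n) = S (min m n))
    (hStend : ∀ x : X, Tendsto (fun n => S n x) atTop (nhds x))
    (hmono : ∀ n, ‖S n‖ ≤ 1)
    (q₀ θ₀ : ℝ) (hq₀ : 1 ≤ q₀) (hθ₀ : 0 < θ₀)
    (hlow : ∀ (n : ℕ) (y : Fin n → X) (a b : Fin n → ℕ),
      (∀ k, a k < b k) →
      (∀ (k : Fin n) (h : (k : ℕ) + 1 < n), b k ≤ a ⟨(k : ℕ) + 1, h⟩) →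
      (∀ k, (S (b k) - S (a k)) (y k) = y k) →
      (∀ k, 1 ≤ ‖y k‖) →
      θ₀ * (n : ℝ) ^ (1 / q₀) ≤ ‖∑ k, y k‖) :
    ∀ (n : ℕ) (f : Fin n → X →L[ℂ] ℂ) (a b : Fin n → ℕ),
      (∀ k, a k < b k) →
      (∀ (k : Fin n) (h : (k : ℕ) + 1 < n), b k ≤ a ⟨(k : ℕ) + 1, h⟩) →
      (∀ k, (f k).comp (S (b k) - S (a k)) = f k) →
      (∀ k, ‖f k‖ ≤ 1) →
      ‖∑ k, f k‖ ≤
        ((q₀ * θ₀) ^ (-(q₀ / (q₀ + 1))) + (q₀ / θ₀ ^ q₀) ^ ((1 : ℝ) / (q₀ + 1))) *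
          (n : ℝ) ^ (q₀ / (q₀ + 1)) := by
  intro n f a b hab hba hf hfle
  classical
  have hq0 : (0:ℝ) < q₀ := lt_of_lt_of_le one_pos hq₀
  have hs0 : (0:ℝ) < q₀ + 1 := by linarith
  -- trivial case n = 0
  rcases Nat.eq_zero_or_pos n with rfl | hn
  · have h0 : (∑ k : Fin 0, f k) = 0 := by simp
    rw [h0, norm_zero]
    positivity
  have hnR : (0:ℝ) < (n:ℝ) := by exact_mod_cast hn
  -- projection composition lemma
  have hproj : ∀ p q p' q' : ℕ, p' ≤ p → p ≤ q → q ≤ q' →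
      (S q - S p).comp (S q' - S p') = S q - S p := by
    intro p q p' q' h1 h2 h3
    have e1 : (S q).comp (S q') = S q := by rw [hSmul, min_eq_left h3]
    have e2 : (S q).comp (S p') = S p' := by
      rw [hSmul, min_eq_right (le_trans h1 h2)]
    have e3 : (S p).comp (S q') = S p := by
      rw [hSmul, min_eq_left (le_trans h2 h3)]
    have e4 : (S p).comp (S p') = S p' := by rw [hSmul, min_eq_right h1]
    simp only [ContinuousLinearMap.sub_comp, ContinuousLinearMap.comp_sub, e1, e2, e3, e4]
    abel
  -- chain lemma
  have hchainaux : ∀ t, ∀ (ht : t < n) (j : Fin n), (j:ℕ) < t → b j ≤ a ⟨t, ht⟩ := by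
    intro t
    induction t with
    | zero => intro ht j hj; omega
    | succ t ih =>
      intro ht j hj
      rcases Nat.lt_succ_iff_lt_or_eq.1 hj with h | h
      · have ht' : t < n := by omega
        refine le_trans (ih ht' j h) ?_
        exact le_trans (le_of_lt (hab ⟨t, ht'⟩)) (hba ⟨t, ht'⟩ ht)
      · have h2 := hba j (by omega : (j:ℕ)+1 < n)
        have : (⟨(j:ℕ)+1, by omega⟩ : Fin n) = ⟨t+1, ht⟩ := by
          apply Fin.ext; simp [h]
        rwa [this] at h2
  have hchain : ∀ j j' : Fin n, j < j' → b j ≤ a j' := by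
    intro j j' hjj
    have := hchainaux j'.1 j'.2 j hjj
    simpa using this
  set δ : ℝ := (q₀ / (θ₀ ^ q₀ * (n:ℝ))) ^ ((1:ℝ)/(q₀+1)) with hδdef
  have hθq : (0:ℝ) < θ₀ ^ q₀ := Real.rpow_pos_of_pos hθ₀ _
  have hδpos : 0 < δ := Real.rpow_pos_of_pos (by positivity) _
  have hδθ : (0:ℝ) < δ * θ₀ := by positivity
  set C : ℝ := (δ * θ₀) ^ (-q₀) + (n:ℝ) * δ with hC
  have hCnn : 0 ≤ C := by positivity
  -- key pointwise bound on the unit ball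
  have key : ∀ x : X, ‖x‖ ≤ 1 → ‖(∑ k, f k) x‖ ≤ C := by
    intro x hx
    set F : Finset (Fin n) := Finset.univ.filter (fun k => δ < ‖f k x‖) with hF
    have hcount : (F.card : ℝ) ≤ (δ * θ₀) ^ (-q₀) := by
      rcases Nat.eq_zero_or_pos F.card with h0 | hmpos
      · rw [h0]
        simpa using Real.rpow_nonneg (le_of_lt hδθ) (-q₀)
      set m := F.card with hm
      let e := F.orderIsoOfFin (rfl : F.card = m)
      let K : Fin m → Fin n := fun i => (e i : Fin n)
      have hKmono : ∀ {i j : Fin m}, i < j → K i < K j := by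
        intro i j h
        exact (Subtype.coe_lt_coe.2 (e.lt_iff_lt.2 h))
      have hKF : ∀ i, δ < ‖f (K i) x‖ := by
        intro i
        have := (e i).2
        exact (Finset.mem_filter.1 this).2
      set A : Fin m → ℕ := fun i => if i.1 = 0 then 0 else a (K i) with hA
      set B : Fin m → ℕ := fun i =>
        if h : i.1 + 1 < m then a (K ⟨i.1 + 1, h⟩) else b (K i) with hB
      have hAa : ∀ i, A i ≤ a (K i) := by
        intro i
        by_cases h : i.1 = 0 <;> simp [hA, h]
      have hbB : ∀ i, b (K i) ≤ B i := by
        intro i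
        by_cases h : i.1 + 1 < m
        · have hlt : i < (⟨i.1 + 1, h⟩ : Fin m) := by
            apply Fin.mk_lt_mk.2 ?_ |>.trans_le le_rfl
            · omega
          simp only [hB, dif_pos h]
          exact hchain _ _ (hKmono hlt)
        · simp [hB, h]
      have hAB : ∀ i, A i < B i := fun i =>
        lt_of_le_of_lt (hAa i) (lt_of_lt_of_le (hab (K i)) (hbB i))
      have hBA : ∀ (i : Fin m) (h : (i:ℕ) + 1 < m), B i ≤ A ⟨(i:ℕ) + 1, h⟩ := by
        intro i h
        simp [hA, hB, dif_pos h]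
      set W : Fin m → X := fun i => (S (B i) - S (A i)) x with hW
      set y : Fin m → X := fun i => ((δ:ℂ))⁻¹ • W i with hy
      have happly : ∀ (T U : X →L[ℂ] X), T.comp U = T → ∀ z, T (U z) = T z := by
        intro T U hTU z
        have := congrArg (fun (V : X →L[ℂ] X) => V z) hTU
        simpa using this
      have hWblock : ∀ i, (S (B i) - S (A i)) (y i) = y i := by
        intro i
        have hp := hproj (A i) (B i) (A i) (B i) le_rfl (le_of_lt (hAB i)) le_rfl
        have := happly _ _ hp x
        simp only [hy, map_smul]
        rw [show (S (B i) - S (A i)) (W i) = W i from this]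
      have hfW : ∀ i, f (K i) x = f (K i) (W i) := by
        intro i
        have h2 := hf (K i)
        have hx1 : f (K i) ((S (b (K i)) - S (a (K i))) x) = f (K i) x := by
          have := congrArg (fun (V : X →L[ℂ] ℂ) => V x) h2
          simpa using this
        have hx2 : f (K i) ((S (b (K i)) - S (a (K i))) (W i)) = f (K i) (W i) := by
          have := congrArg (fun (V : X →L[ℂ] ℂ) => V (W i)) h2
          simpa using this
        have h3 : (S (b (K i)) - S (a (K i))) (W i) = (S (b (K i)) - S (a (K i))) x := by
          have hp := hproj (a (K i)) (b (K i)) (A i) (B i) (hAa i)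
            (le_of_lt (hab (K i))) (hbB i)
          exact happly _ _ hp x
        rw [← hx1, ← hx2, h3]
      have hynorm : ∀ i, 1 ≤ ‖y i‖ := by
        intro i
        have h1 : δ < ‖f (K i) (W i)‖ := by
          rw [← hfW i]; exact hKF i
        have h2 : ‖f (K i) (W i)‖ ≤ ‖W i‖ := by
          calc ‖f (K i) (W i)‖ ≤ ‖f (K i)‖ * ‖W i‖ := (f (K i)).le_opNorm _
            _ ≤ 1 * ‖W i‖ := by
                exact mul_le_mul_of_nonneg_right (hfle (K i)) (norm_nonneg _)
            _ = ‖W i‖ := one_mul _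
        have h3 : δ ≤ ‖W i‖ := le_trans (le_of_lt h1) h2
        have h4 : ‖y i‖ = δ⁻¹ * ‖W i‖ := by
          rw [hy]
          simp only [norm_smul, norm_inv, Complex.norm_real, Real.norm_eq_abs,
            abs_of_pos hδpos]
        rw [h4]
        calc (1:ℝ) = δ⁻¹ * δ := by field_simp
          _ ≤ δ⁻¹ * ‖W i‖ := mul_le_mul_of_nonneg_left h3 (by positivity)
      -- telescoping
      have hmlt : m - 1 < m := by omega
      set G : ℕ → X := fun t => if h : t < m then S (A ⟨t, h⟩) x
        else S (B ⟨m - 1, hmlt⟩) x with hG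
      have hstep : ∀ (i : Fin m), W i = G ((i:ℕ)+1) - G (i:ℕ) := by
        intro i
        have hGi : G (i:ℕ) = S (A i) x := by
          simp only [hG, dif_pos i.2]
        have hGi1 : G ((i:ℕ)+1) = S (B i) x := by
          by_cases h : (i:ℕ)+1 < m
          · simp only [hG, dif_pos h]
            have : A ⟨(i:ℕ)+1, h⟩ = B i := by
              simp [hA, hB, dif_pos h]
            rw [this]
          · simp only [hG, dif_neg h]
            have : (⟨m-1, hmlt⟩ : Fin m) = i := by
              apply Fin.ext; simp; omega
            rw [this]
        rw [hGi, hGi1]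
        simp [hW]
      have htel : ∑ i, W i = S (B ⟨m - 1, hmlt⟩) x := by
        have h1 : ∑ i, W i = ∑ i : Fin m, (G ((i:ℕ)+1) - G (i:ℕ)) :=
          Finset.sum_congr rfl (fun i _ => hstep i)
        rw [h1, Fin.sum_univ_eq_sum_range (fun t => G (t+1) - G t) m,
          Finset.sum_range_sub G m]
        have hG0 : G 0 = 0 := by
          simp only [hG, dif_pos hmpos]
          have : A ⟨0, hmpos⟩ = 0 := by simp [hA]
          rw [this, hS0]
          simp
        have hGm : G m = S (B ⟨m - 1, hmlt⟩) x := by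
          simp [hG]
        rw [hG0, hGm, sub_zero]
      have hsumy : ‖∑ i, y i‖ ≤ δ⁻¹ := by
        have h1 : ∑ i, y i = ((δ:ℂ))⁻¹ • ∑ i, W i := by
          rw [hy, Finset.smul_sum]
        rw [h1, htel, norm_smul]
        have h2 : ‖S (B ⟨m - 1, hmlt⟩) x‖ ≤ 1 := by
          calc ‖S (B ⟨m - 1, hmlt⟩) x‖ ≤ ‖S (B ⟨m - 1, hmlt⟩)‖ * ‖x‖ :=
            (S _).le_opNorm x
            _ ≤ 1 * 1 := by
              exact mul_le_mul (hmono _) hx (norm_nonneg _) zero_le_one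
            _ = 1 := one_mul 1
        have h3 : ‖((δ:ℂ))⁻¹‖ = δ⁻¹ := by
          simp [norm_inv, Complex.norm_real, abs_of_pos hδpos]
        rw [h3]
        calc δ⁻¹ * ‖S (B ⟨m - 1, hmlt⟩) x‖ ≤ δ⁻¹ * 1 :=
          mul_le_mul_of_nonneg_left h2 (by positivity)
          _ = δ⁻¹ := mul_one _
      have hlow' := hlow m y A B hAB hBA hWblock hynorm
      have h5 : θ₀ * (m:ℝ) ^ ((1:ℝ) / q₀) ≤ δ⁻¹ := le_trans hlow' hsumy
      have h6 : (m:ℝ) ^ ((1:ℝ) / q₀) ≤ (δ * θ₀)⁻¹ := by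
        rw [mul_inv]
        rw [mul_comm] at h5
        rw [← le_div_iff₀ hθ₀] at h5
        calc (m:ℝ) ^ ((1:ℝ) / q₀) ≤ δ⁻¹ / θ₀ := h5
          _ = δ⁻¹ * θ₀⁻¹ := div_eq_mul_inv _ _
      have h7 : ((m:ℝ) ^ ((1:ℝ) / q₀)) ^ q₀ ≤ ((δ * θ₀)⁻¹) ^ q₀ :=
        Real.rpow_le_rpow (Real.rpow_nonneg (Nat.cast_nonneg m) _) h6 (le_of_lt hq0)
      have h8 : ((m:ℝ) ^ ((1:ℝ) / q₀)) ^ q₀ = (m:ℝ) := by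
        rw [← Real.rpow_mul (Nat.cast_nonneg m), one_div_mul_cancel (ne_of_gt hq0),
          Real.rpow_one]
      have h9 : ((δ * θ₀)⁻¹) ^ q₀ = (δ * θ₀) ^ (-q₀) := by
        rw [Real.inv_rpow (le_of_lt hδθ), Real.rpow_neg (le_of_lt hδθ)]
      rw [h8, h9] at h7
      exact h7
    -- now the pointwise estimate
    have hsum : ‖(∑ k, f k) x‖ = ‖∑ k, f k x‖ := by
      congr 1
      simp [ContinuousLinearMap.sum_apply]
    rw [hsum]
    calc ‖∑ k, f k x‖ ≤ ∑ k, ‖f k x‖ := norm_sum_le _ _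
      _ = ∑ k ∈ F, ‖f k x‖ + ∑ k ∈ Finset.univ.filter (fun k => ¬ (δ < ‖f k x‖)), ‖f k x‖ := by
          rw [hF, Finset.sum_filter_add_sum_filter_not]
      _ ≤ (F.card : ℝ) * 1 + (n:ℝ) * δ := by
          have hb1 : ∑ k ∈ F, ‖f k x‖ ≤ (F.card : ℝ) * 1 := by
            have hone : ∀ k : Fin n, ‖f k x‖ ≤ 1 := by
              intro k
              calc ‖f k x‖ ≤ ‖f k‖ * ‖x‖ := (f k).le_opNorm x
                _ ≤ 1 * 1 := mul_le_mul (hfle k) hx (norm_nonneg _) zero_le_one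
                _ = 1 := one_mul 1
            calc ∑ k ∈ F, ‖f k x‖ ≤ ∑ _k ∈ F, (1:ℝ) :=
                Finset.sum_le_sum (fun k _ => hone k)
              _ = (F.card : ℝ) * 1 := by rw [Finset.sum_const, nsmul_eq_mul]
          have hb2 : ∑ k ∈ Finset.univ.filter (fun k => ¬ (δ < ‖f k x‖)), ‖f k x‖
              ≤ (n:ℝ) * δ := by
            calc ∑ k ∈ Finset.univ.filter (fun k => ¬ (δ < ‖f k x‖)), ‖f k x‖
                ≤ ∑ _k ∈ Finset.univ.filter (fun k => ¬ (δ < ‖f k x‖)), δ := by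
                  apply Finset.sum_le_sum
                  intro k hk
                  exact le_of_not_gt (Finset.mem_filter.1 hk).2
              _ = ((Finset.univ.filter (fun k => ¬ (δ < ‖f k x‖))).card : ℝ) * δ := by
                  rw [Finset.sum_const, nsmul_eq_mul]
              _ ≤ (n:ℝ) * δ := by
                  apply mul_le_mul_of_nonneg_right _ (le_of_lt hδpos)
                  have := Finset.card_filter_le Finset.univ (fun k => ¬ (δ < ‖f k x‖))
                  simp only [Finset.card_univ, Fintype.card_fin] at this
                  exact_mod_cast this
          exact add_le_add hb1 hb2
      _ ≤ C := by
          rw [hC, mul_one]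
          exact add_le_add_left hcount _
  -- op-norm bound
  have hnorm : ‖∑ k, f k‖ ≤ C := by
    apply ContinuousLinearMap.opNorm_le_bound _ hCnn
    intro x
    by_cases hx0 : x = 0
    · simp [hx0]
    · have hxn : (0:ℝ) < ‖x‖ := norm_pos_iff.2 hx0
      set u : X := (((‖x‖:ℝ):ℂ))⁻¹ • x with hu
      have hun : ‖u‖ ≤ 1 := by
        rw [hu, norm_smul, norm_inv, Complex.norm_real, Real.norm_eq_abs,
          abs_of_pos hxn, inv_mul_cancel₀ (ne_of_gt hxn)]
      have h1 := key u hun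
      have h2 : (∑ k, f k) u = (((‖x‖:ℝ):ℂ))⁻¹ • ((∑ k, f k) x) := by
        rw [hu, map_smul]
      rw [h2, norm_smul, norm_inv, Complex.norm_real, Real.norm_eq_abs,
        abs_of_pos hxn] at h1
      calc ‖(∑ k, f k) x‖ = ‖x‖ * (‖x‖⁻¹ * ‖(∑ k, f k) x‖) := by
            field_simp
        _ ≤ ‖x‖ * C := mul_le_mul_of_nonneg_left h1 (le_of_lt hxn)
        _ = C * ‖x‖ := mul_comm _ _
  -- final arithmetic: C equals the right-hand side
  have hLn := Real.log_rpow hnR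
  have e1 : (δ * θ₀) ^ (-q₀) = (q₀ * θ₀) ^ (-(q₀ / (q₀ + 1))) * (n:ℝ) ^ (q₀ / (q₀ + 1)) := by
    apply log_eq_imp (Real.rpow_pos_of_pos hδθ _)
      (by positivity)
    rw [Real.log_rpow hδθ, Real.log_mul (ne_of_gt hδpos) (ne_of_gt hθ₀),
      Real.log_mul (ne_of_gt (Real.rpow_pos_of_pos (by positivity) _)) (ne_of_gt (by positivity : (0:ℝ) < (n:ℝ) ^ (q₀ / (q₀ + 1)))),
      Real.log_rpow (by positivity : (0:ℝ) < q₀ * θ₀), Real.log_rpow hnR,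
      hδdef, Real.log_rpow (by positivity : (0:ℝ) < q₀ / (θ₀ ^ q₀ * (n:ℝ))),
      Real.log_div (ne_of_gt hq0) (by positivity),
      Real.log_mul (ne_of_gt hθq) (ne_of_gt hnR),
      Real.log_rpow hθ₀, Real.log_mul (ne_of_gt hq0) (ne_of_gt hθ₀)]
    field_simp
    ring
  have e2 : (n:ℝ) * δ = (q₀ / θ₀ ^ q₀) ^ ((1:ℝ) / (q₀ + 1)) * (n:ℝ) ^ (q₀ / (q₀ + 1)) := by
    apply log_eq_imp (by positivity) (by positivity)
    rw [Real.log_mul (ne_of_gt hnR) (ne_of_gt hδpos),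
      Real.log_mul (ne_of_gt (Real.rpow_pos_of_pos (by positivity) _)) (ne_of_gt (by positivity : (0:ℝ) < (n:ℝ) ^ (q₀ / (q₀ + 1)))),
      Real.log_rpow (by positivity : (0:ℝ) < q₀ / θ₀ ^ q₀), Real.log_rpow hnR,
      hδdef, Real.log_rpow (by positivity : (0:ℝ) < q₀ / (θ₀ ^ q₀ * (n:ℝ))),
      Real.log_div (ne_of_gt hq0) (by positivity),
      Real.log_mul (ne_of_gt hθq) (ne_of_gt hnR),
      Real.log_div (ne_of_gt hq0) (ne_of_gt hθq)]
    field_simp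
    ring
  calc ‖∑ k, f k‖ ≤ C := hnorm
    _ = ((q₀ * θ₀) ^ (-(q₀ / (q₀ + 1))) + (q₀ / θ₀ ^ q₀) ^ ((1 : ℝ) / (q₀ + 1))) *
        (n : ℝ) ^ (q₀ / (q₀ + 1)) := by
      rw [hC, e1, e2]; ring
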